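/- Let D be a triangulated category with a bounded t-structure (D^{≤0}, D^{≥0}), fix d ≥ 1, and let X be a full subcategory of the d-extended heart D^{[-d+1,0]} that is closed under d-factors. Then X is closed under direct summands. -/

import Mathlib

open CategoryTheory Category Limits Pretriangulated Triangulated

universe v u

variable {C : Type u} [Category.{v} C] [Preadditive C] [HasZeroObject C] [HasShift C ℤ]
  [∀ (n : ℤ), (shiftFunctor C n).Additive] [Pretriangulated C]

/-- The t-structure `t` is bounded. -/
def IsBoundedTStr (t : TStructure C) : Prop :=
  ∀ X : C, ∃ a b : ℤ, t.ge a X ∧ t.le b X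

/-- The `d`-extended heart `D^{[-d+1,0]}` of the t-structure `t`, as a set of objects. -/
def extHeart (t : TStructure C) (d : ℕ) : Set C :=
  fun X => t.le 0 X ∧ t.ge (1 - (d : ℤ)) X

/-- A set of objects closed under isomorphisms. -/
def IsoClosed (S : Set C) : Prop := ∀ ⦃X Y : C⦄, (X ≅ Y) → X ∈ S → Y ∈ S

/-- `Z ∈ D^{[-d+1,0]}` is a `d`-factor of `𝒳`: there are `d` distinguished triangles
`Z_i → X_i → Z_{i-1} → Z_i[1]` (`1 ≤ i ≤ d`) with `Z_0 = Z`, `Z_i ∈ D^{[-d+1,0]}` and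
`X_i ∈ 𝒳`. -/
def IsDFactor (t : TStructure C) (d : ℕ) (𝒳 : Set C) (Z : C) : Prop :=
  Z ∈ extHeart t d ∧
  ∃ (Zc : ℕ → C) (Xc : ℕ → C), Zc 0 = Z ∧
    ∀ i : ℕ, 1 ≤ i → i ≤ d →
      Zc i ∈ extHeart t d ∧ Xc i ∈ 𝒳 ∧
      ∃ (f : Zc i ⟶ Xc i) (g : Xc i ⟶ Zc (i - 1)) (h : Zc (i - 1) ⟶ (Zc i)⟦(1 : ℤ)⟧),
        Triangle.mk f g h ∈ (distTriang C)

/-- `Fac_d(𝒳)`, the set of `d`-factors of `𝒳`. -/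
def facd (t : TStructure C) (d : ℕ) (𝒳 : Set C) : Set C := fun Z => IsDFactor t d 𝒳 Z

/-- `𝒳` is closed under `d`-factors. -/
def ClosedUnderDFactors (t : TStructure C) (d : ℕ) (𝒳 : Set C) : Prop :=
  ∀ Z : C, IsDFactor t d 𝒳 Z → Z ∈ 𝒳

/-- `S` is closed under extensions: the middle term of any distinguished triangle whose
outer terms lie in `S` lies in `S`. -/
def ExtClosed (S : Set C) : Prop :=
  ∀ ⦃X Y Z : C⦄ (f : X ⟶ Y) (g : Y ⟶ Z) (h : Z ⟶ X⟦(1 : ℤ)⟧),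
    Triangle.mk f g h ∈ (distTriang C) → X ∈ S → Z ∈ S → Y ∈ S

/-- `𝒳 ⊆ D^{[-d+1,0]}` is `d`-FAE closed: closed under isomorphisms, `d`-factors and
extensions. -/
def IsDFAEClosed (t : TStructure C) (d : ℕ) (𝒳 : Set C) : Prop :=
  𝒳 ⊆ extHeart t d ∧ IsoClosed 𝒳 ∧ ClosedUnderDFactors t d 𝒳 ∧ ExtClosed 𝒳

/-- `A * B`: the set of objects `Z` fitting in a distinguished triangle `X → Z → Y → X[1]`
with `X ∈ A` and `Y ∈ B`. -/
def star (A B : Set C) : Set C := fun Z =>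
  ∃ (X : C) (_ : X ∈ A) (Y : C) (_ : Y ∈ B) (f : X ⟶ Z) (g : Z ⟶ Y) (h : Y ⟶ X⟦(1 : ℤ)⟧),
    Triangle.mk f g h ∈ (distTriang C)

/-- A suspended subcategory: closed under isomorphisms, extensions and positive shifts. -/
def Suspended (S : Set C) : Prop :=
  IsoClosed S ∧ ExtClosed S ∧ ∀ X ∈ S, X⟦(1 : ℤ)⟧ ∈ S

/-- The aisle `D^{≤ n}` as a set. -/
def aisle (t : TStructure C) (n : ℤ) : Set C := fun X => t.le n X

/-- The coaisle `D^{≥ n}` as a set. -/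
def coaisle (t : TStructure C) (n : ℤ) : Set C := fun X => t.ge n X

/-- The right Hom-orthogonal `S^⊥` inside the extended heart. -/
def rPerp (t : TStructure C) (d : ℕ) (S : Set C) : Set C :=
  fun Z => Z ∈ extHeart t d ∧ ∀ Y ∈ S, ∀ f : Y ⟶ Z, f = 0

/-- The left Hom-orthogonal `^⊥S` inside the extended heart. -/
def lPerp (t : TStructure C) (d : ℕ) (S : Set C) : Set C :=
  fun Z => Z ∈ extHeart t d ∧ ∀ Y ∈ S, ∀ f : Z ⟶ Y, f = 0

/-- `S^{⊥_{≤0}} = {Z ∈ D^{[-d+1,0]} : Hom(S, Z[j]) = 0 for all j ≤ 0}`. -/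
def rPerpLe0 (t : TStructure C) (d : ℕ) (S : Set C) : Set C :=
  fun Z => Z ∈ extHeart t d ∧ ∀ Y ∈ S, ∀ j : ℤ, j ≤ 0 → ∀ f : Y ⟶ Z⟦j⟧, f = 0

/-- `^{⊥_{≤0}}S = {Z ∈ D^{[-d+1,0]} : Hom(Z, S[j]) = 0 for all j ≤ 0}`. -/
def lPerpLe0 (t : TStructure C) (d : ℕ) (S : Set C) : Set C :=
  fun Z => Z ∈ extHeart t d ∧ ∀ Y ∈ S, ∀ j : ℤ, j ≤ 0 → ∀ f : Z ⟶ Y⟦j⟧, f = 0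

/-- `(T, F)` is a torsion pair in the extended heart. -/
def IsTorsionPair (t : TStructure C) (d : ℕ) (T F : Set C) : Prop :=
  T ⊆ extHeart t d ∧ F ⊆ extHeart t d ∧ T = lPerp t d F ∧ F = rPerp t d T

/-- `(T, F)` is a positive torsion pair: a torsion pair with `Hom(T, F[j]) = 0` for all
`j ≤ 0`. -/
def IsPositiveTorsionPair (t : TStructure C) (d : ℕ) (T F : Set C) : Prop :=
  IsTorsionPair t d T F ∧
  ∀ X ∈ T, ∀ Y ∈ F, ∀ j : ℤ, j ≤ 0 → ∀ f : X ⟶ Y⟦j⟧, f = 0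

/-- `(T, F)` is an `s`-torsion pair in the extended heart: `D^{[-d+1,0]} = T * F`,
`Hom(T, F) = 0` and `Hom(T, F[-1]) = 0`. -/
def IsSTorsionPair (t : TStructure C) (d : ℕ) (T F : Set C) : Prop :=
  T ⊆ extHeart t d ∧ F ⊆ extHeart t d ∧
  (∀ Z ∈ extHeart t d,
    ∃ (X : C) (_ : X ∈ T) (Y : C) (_ : Y ∈ F) (f : X ⟶ Z) (g : Z ⟶ Y)
      (h : Y ⟶ X⟦(1 : ℤ)⟧), Triangle.mk f g h ∈ (distTriang C)) ∧
  (∀ X ∈ T, ∀ Y ∈ F, ∀ f : X ⟶ Y, f = 0) ∧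
  (∀ X ∈ T, ∀ Y ∈ F, ∀ f : X ⟶ Y⟦(-1 : ℤ)⟧, f = 0)

/-- A semibrick in the `d`-extended heart. -/
def IsSemibrick (t : TStructure C) (d : ℕ) (S : Set C) : Prop :=
  S ⊆ extHeart t d ∧
  (∀ X ∈ S, ¬ IsZero X ∧ ∀ f : X ⟶ X, f ≠ 0 → IsIso f) ∧
  (∀ X ∈ S, ∀ Y ∈ S, ∀ i : ℤ, i < 0 → ∀ f : X ⟶ Y⟦i⟧, f = 0) ∧
  (∀ X ∈ S, ∀ Y ∈ S, IsEmpty (X ≅ Y) → ∀ f : X ⟶ Y, f = 0)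

/-- The simple objects of an extension-closed subcategory `W` (whose conflations are the
distinguished triangles with all three terms in `W`): nonzero objects admitting no
conflation `L ↣ X ↠ M` in `W` with both `L` and `M` nonzero. -/
def simOf (W : Set C) : Set C := fun X =>
  X ∈ W ∧ ¬ IsZero X ∧
  ∀ ⦃L M : C⦄ (f : L ⟶ X) (g : X ⟶ M) (h : M ⟶ L⟦(1 : ℤ)⟧),
    Triangle.mk f g h ∈ (distTriang C) → L ∈ W → M ∈ W → IsZero L ∨ IsZero M

/-- `FiltMem S X`: the object `X` admits a finite filtration with subquotients in `S`. -/
inductive FiltMem (S : Set C) : C → Prop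
  | zero (X : C) : IsZero X → FiltMem S X
  | step (Y X Sm : C) (f : Y ⟶ X) (g : X ⟶ Sm) (h : Sm ⟶ Y⟦(1 : ℤ)⟧) :
      Triangle.mk f g h ∈ (distTriang C) → FiltMem S Y → Sm ∈ S → FiltMem S X

/-- `ExtClosureMem S X`: membership in the extension closure of `S` (the smallest
subcategory containing `S` and the zero objects, closed under isomorphisms and
extensions). -/
inductive ExtClosureMem (S : Set C) : C → Prop
  | of (X : C) : X ∈ S → ExtClosureMem S X
  | zero (X : C) : IsZero X → ExtClosureMem S X
  | iso (X Y : C) : (X ≅ Y) → ExtClosureMem S X → ExtClosureMem S Y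
  | ext (X Y Z : C) (f : X ⟶ Y) (g : Y ⟶ Z) (h : Z ⟶ X⟦(1 : ℤ)⟧) :
      Triangle.mk f g h ∈ (distTriang C) → ExtClosureMem S X → ExtClosureMem S Z →
      ExtClosureMem S Y

/-- A wide subcategory of the `d`-extended heart: closed under isomorphisms and
extensions, with `Hom(W, W[i]) = 0` for `i < 0`, and such that the restricted
extriangulated structure is abelian, i.e., there is an abelian structure on the
corresponding full subcategory whose short exact sequences (kernel-cokernel pairs) are
exactly the distinguished triangles with all three terms in `W`. -/
def IsWide (t : TStructure C) (d : ℕ) (W : Set C) : Prop :=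
  W ⊆ extHeart t d ∧ IsoClosed W ∧ ExtClosed W ∧
  (∀ X ∈ W, ∀ Y ∈ W, ∀ i : ℤ, i < 0 → ∀ f : X ⟶ Y⟦i⟧, f = 0) ∧
  ∃ _ : Abelian (ObjectProperty.FullSubcategory fun X => X ∈ W),
    ∀ (X Y Z : ObjectProperty.FullSubcategory fun X => X ∈ W) (f : X ⟶ Y) (g : Y ⟶ Z),
      ((f ≫ g = 0) ∧
        (∀ (V : ObjectProperty.FullSubcategory fun X => X ∈ W) (k : V ⟶ Y), k ≫ g = 0 →
          ∃! l : V ⟶ X, l ≫ f = k) ∧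
        (∀ (V : ObjectProperty.FullSubcategory fun X => X ∈ W) (k : Y ⟶ V), f ≫ k = 0 →
          ∃! l : Z ⟶ V, g ≫ l = k))
      ↔ ∃ h : Z.obj ⟶ X.obj⟦(1 : ℤ)⟧,
          Triangle.mk (show X.obj ⟶ Y.obj from f.hom) (show Y.obj ⟶ Z.obj from g.hom) h ∈
            (distTriang C)

/-- A finite-length wide subcategory: a wide subcategory in which every object has a
finite filtration with simple subquotients. -/
def IsFiniteLengthWide (t : TStructure C) (d : ℕ) (W : Set C) : Prop :=
  IsWide t d W ∧ ∀ X ∈ W, FiltMem (simOf W) X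

/-- The shift `S[n]` of a set of objects. -/
def shiftSet (S : Set C) (n : ℤ) : Set C := fun X => X⟦-n⟧ ∈ S

/-- The exact heart `H_T = (D^{≤ -d} * T) ∩ (T^⊥[1] * D^{≥ 0})` of a `d`-FAE closed
subcategory `T`. -/
def heartOf (t : TStructure C) (d : ℕ) (T : Set C) : Set C :=
  star (aisle t (-(d : ℤ))) T ∩ star (shiftSet (rPerp t d T) 1) (coaisle t 0)

/-- `phiClosure t d S`: the smallest `d`-FAE closed subcategory of the extended heart
containing `S`. -/
def phiClosure (t : TStructure C) (d : ℕ) (S : Set C) : Set C :=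
  fun X => ∀ U : Set C, IsDFAEClosed t d U → S ⊆ U → X ∈ U

section Aux

variable (t : TStructure C)

lemma tstr_hom_zero {X Y : C} (f : X ⟶ Y) {a b : ℤ} (hab : a < b)
    (hX : t.le a X) (hY : t.ge b Y) : f = 0 := by
  have hX' : t.le 0 (X⟦a⟧) := t.le_shift a a 0 (add_zero a) X hX
  have hY1 : t.ge (a + 1) Y := t.ge_antitone hab Y hY
  have hY' : t.ge 1 (Y⟦a⟧) := t.ge_shift (a + 1) a 1 rfl Y hY1
  have h0 : (shiftFunctor C a).map f = 0 := t.zero' _ hX' hY'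
  exact (shiftFunctor C a).map_injective (by rw [h0, Functor.map_zero])

lemma tstr_LE_summand (n : ℤ) (X Y : C) [HasBinaryBiproducts C]
    (h : t.le n (X ⊞ Y)) : t.le n X := by
  obtain ⟨A, B, hA, hB, f, g, hcon, mem⟩ := t.exists_triangle X n (n + 1) rfl
  have hg : g = 0 := by
    have h1 : (biprod.fst : X ⊞ Y ⟶ X) ≫ g = 0 :=
      tstr_hom_zero t _ (lt_add_one n) h hB
    calc g = biprod.inl ≫ ((biprod.fst : X ⊞ Y ⟶ X) ≫ g) := by simp
    _ = 0 := by rw [h1, comp_zero]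
  have hBzero : IsZero B := by
    obtain ⟨w, hw⟩ := Triangle.yoneda_exact₃ _ mem (𝟙 B) (by change g ≫ 𝟙 B = 0; rw [hg, zero_comp])
    have hw0 : w = 0 := tstr_hom_zero t w (show n - 1 < n + 1 by omega)
      (t.le_shift n 1 (n - 1) (by omega) A hA) hB
    rw [IsZero.iff_id_eq_zero, hw, hw0, comp_zero]; rfl
  have : IsIso f := by
    have := Triangle.isZero₃_iff_isIso₁ _ mem
    exact this.1 hBzero
  exact ((t.le n).prop_iff_of_iso (asIso f)).1 hA

lemma tstr_GE_summand (m : ℤ) (X Y : C) [HasBinaryBiproducts C]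
    (h : t.ge m (X ⊞ Y)) : t.ge m X := by
  obtain ⟨A, B, hA, hB, f, g, hcon, mem⟩ := t.exists_triangle X (m - 1) m (by omega)
  have hf : f = 0 := by
    have h1 : f ≫ (biprod.inl : X ⟶ X ⊞ Y) = 0 :=
      tstr_hom_zero t _ (show m - 1 < m by omega) hA h
    calc f = (f ≫ (biprod.inl : X ⟶ X ⊞ Y)) ≫ biprod.fst := by simp
    _ = 0 := by rw [h1, zero_comp]
  have hAzero : IsZero A := by
    obtain ⟨v, hv⟩ := Triangle.coyoneda_exact₂ _ (inv_rot_of_distTriang _ mem) (𝟙 A)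
      (by change 𝟙 A ≫ f = 0; rw [hf, comp_zero])
    have hv0 : v = 0 := tstr_hom_zero t v (show m - 1 < m + 1 by omega) hA
      (t.ge_shift m (-1) (m + 1) (by omega) B hB)
    rw [IsZero.iff_id_eq_zero, hv, hv0, zero_comp]; rfl
  have : IsIso g := by
    have := Triangle.isZero₁_iff_isIso₂ _ mem
    exact this.1 hAzero
  exact ((t.ge m).prop_iff_of_iso (asIso g).symm).1 hB

lemma extHeart_summand (d : ℕ) (X Y : C) [HasBinaryBiproducts C]
    (h : (X ⊞ Y) ∈ extHeart t d) : X ∈ extHeart t d ∧ Y ∈ extHeart t d := by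
  obtain ⟨h1, h2⟩ := h
  have h1' : t.le 0 (Y ⊞ X) := ((t.le 0).prop_iff_of_iso (biprod.braiding X Y)).1 h1
  have h2' : t.ge (1 - (d : ℤ)) (Y ⊞ X) :=
    ((t.ge (1 - (d : ℤ))).prop_iff_of_iso (biprod.braiding X Y)).1 h2
  exact ⟨⟨tstr_LE_summand t 0 X Y h1, tstr_GE_summand t _ X Y h2⟩,
    ⟨tstr_LE_summand t 0 Y X h1', tstr_GE_summand t _ Y X h2'⟩⟩

lemma swapped_biprod_triangle_distinguished (X Y : C) [HasBinaryBiproducts C] :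
    Triangle.mk (biprod.inr : Y ⟶ X ⊞ Y) (biprod.fst : X ⊞ Y ⟶ X) 0 ∈ distTriang C := by
  refine isomorphic_distinguished _ (binaryBiproductTriangle_distinguished Y X) _ ?_
  exact Triangle.isoMk _ _ (Iso.refl _) (biprod.braiding X Y) (Iso.refl _)
    (by change (biprod.inr : Y ⟶ X ⊞ Y) ≫ (biprod.braiding X Y).hom = 𝟙 Y ≫ biprod.inl
        ext <;> simp)
    (by change (biprod.fst : X ⊞ Y ⟶ X) ≫ 𝟙 X = (biprod.braiding X Y).hom ≫ biprod.snd; simp)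
    (by change (0 : X ⟶ Y⟦(1:ℤ)⟧) ≫ (shiftFunctor C (1:ℤ)).map (𝟙 Y) = 𝟙 X ≫ 0; simp)

end Aux

/-- **(Lemma, closure under direct summands.)** Let `𝒳 ⊆ D^{[-d+1,0]}` be closed under
`d`-factors. Then `𝒳` is closed under direct summands. -/
theorem closedUnderDFactors_summands [HasBinaryBiproducts C]
    (t : TStructure C) (hb : IsBoundedTStr t) (d : ℕ) (hd : 1 ≤ d)
    (𝒳 : Set C) (h𝒳 : 𝒳 ⊆ extHeart t d) (hfac : ClosedUnderDFactors t d 𝒳) :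
    ∀ X Y : C, (X ⊞ Y) ∈ 𝒳 → X ∈ 𝒳 := by
  intro X Y hmem
  have hXYh : (X ⊞ Y) ∈ extHeart t d := h𝒳 hmem
  obtain ⟨hXh, hYh⟩ := extHeart_summand t d X Y hXYh
  apply hfac
  refine ⟨hXh, fun i => if i % 2 = 0 then X else Y, fun _ => X ⊞ Y, by simp, ?_⟩
  intro i hi1 hid
  rcases Nat.even_or_odd i with he | ho
  · have h0 : i % 2 = 0 := Nat.even_iff.1 he
    have h1 : (i - 1) % 2 = 1 := by omega
    have e1 : (if i % 2 = 0 then X else Y) = X := by rw [if_pos h0]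
    have e2 : (if (i - 1) % 2 = 0 then X else Y) = Y := by rw [if_neg (by omega)]
    beta_reduce
    rw [e1, e2]
    exact ⟨hXh, hmem, biprod.inl, biprod.snd, 0,
      binaryBiproductTriangle_distinguished X Y⟩
  · have h0 : i % 2 = 1 := Nat.odd_iff.1 ho
    have e1 : (if i % 2 = 0 then X else Y) = Y := by rw [if_neg (by omega)]
    have e2 : (if (i - 1) % 2 = 0 then X else Y) = X := by rw [if_pos (by omega)]
    beta_reduce
    rw [e1, e2]
    exact ⟨hYh, hmem, biprod.inr, biprod.fst, 0,
      swapped_biprod_triangle_distinguished X Y⟩
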